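/- Let q > 1 be a real number, let k ≥ 2 be an integer, and let α, α₁, …, α_k be real numbers with 0 < α, α_i < 1 for every i ∈ {1,…,k}, and α + (k−1) = α₁ + ⋯ + α_k. Then 1/(q^α − 1) + (k−1)/(q − 1) > 1/(q^(α₁) − 1) + ⋯ + 1/(q^(α_k) − 1). -/

import Mathlib

/-!
STATEMENT 6. For a real `q > 1`, an integer `k ≥ 2`, and reals `α, α₁, …, α_k`
with `0 < α`, `0 < α_i < 1` for every `i`, and `α + (k-1) = α₁ + ⋯ + α_k`:
`1/(q^α - 1) + (k-1)/(q - 1) > 1/(q^(α₁) - 1) + ⋯ + 1/(q^(α_k) - 1)`.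
-/

lemma aux_strictConvexOn (q : ℝ) (hq : 1 < q) :
    StrictConvexOn ℝ (Set.Ioi (0:ℝ)) (fun x => (q ^ x - 1)⁻¹) := by
  have hq0 : (0:ℝ) < q := lt_trans one_pos hq
  have hc : 0 < Real.log q := Real.log_pos hq
  set c := Real.log q with hcdef
  have hfe : (fun x : ℝ => (q ^ x - 1)⁻¹) = fun x => (Real.exp (c * x) - 1)⁻¹ := by
    funext x
    rw [Real.rpow_def_of_pos hq0]
  rw [hfe]
  have hE : ∀ x : ℝ, 0 < x → 1 < Real.exp (c * x) := fun x hx =>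
    Real.one_lt_exp_iff.mpr (mul_pos hc hx)
  have hder : ∀ x : ℝ, 0 < x →
      HasDerivAt (fun y => (Real.exp (c * y) - 1)⁻¹)
        (-(Real.exp (c * x) * (c * 1)) / (Real.exp (c * x) - 1) ^ 2) x := by
    intro x hx
    have h1 : HasDerivAt (fun y : ℝ => c * y) (c * 1) x := (hasDerivAt_id x).const_mul c
    have h2 := (h1.exp.sub_const 1)
    exact h2.inv (by have := hE x hx; intro h; rw [sub_eq_zero] at h; linarith)
  apply StrictMonoOn.strictConvexOn_of_deriv (convex_Ioi 0)
  · intro x hx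
    exact (hder x hx).continuousAt.continuousWithinAt
  · rw [interior_Ioi]
    intro x hx y hy hxy
    rw [(hder x hx).deriv, (hder y hy).deriv]
    have hu : 1 < Real.exp (c * x) := hE x hx
    have huv : Real.exp (c * x) < Real.exp (c * y) :=
      Real.exp_lt_exp.mpr (by exact mul_lt_mul_of_pos_left hxy hc)
    set u := Real.exp (c * x)
    set v := Real.exp (c * y)
    have hv : 1 < v := hE y hy
    rw [div_lt_div_iff₀ (pow_pos (by linarith) 2) (pow_pos (by linarith) 2)]
    nlinarith [mul_pos hc (mul_pos (sub_pos.2 huv) (show (0:ℝ) < u * v - 1 by nlinarith))]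

theorem statement6 (q : ℝ) (hq : 1 < q) (k : ℕ) (hk : 2 ≤ k)
    (α : ℝ) (a : Fin k → ℝ)
    (hα : 0 < α) (ha0 : ∀ i, 0 < a i) (ha1 : ∀ i, a i < 1)
    (hsum : α + ((k : ℝ) - 1) = ∑ i, a i) :
    (∑ i, 1 / (q ^ (a i) - 1)) < 1 / (q ^ α - 1) + ((k : ℝ) - 1) / (q - 1) := by
  have hk1 : (1:ℕ) ≤ k := le_trans (by norm_num) hk
  haveI : NeZero k := ⟨by omega⟩
  have hkR : (2:ℝ) ≤ (k:ℝ) := by exact_mod_cast hk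
  -- α < 1
  have hsumlt : ∑ i, a i < (k:ℝ) := by
    calc ∑ i, a i < ∑ _i : Fin k, (1:ℝ) :=
          Finset.sum_lt_sum_of_nonempty Finset.univ_nonempty (fun i _ => ha1 i)
      _ = (k:ℝ) := by simp
  have hα1 : α < 1 := by linarith
  have h1α : (0:ℝ) < 1 - α := by linarith
  -- α < a i for every i
  have hαa : ∀ i, α < a i := by
    intro i
    have herase : ∑ j ∈ Finset.univ.erase i, a j < ∑ _j ∈ Finset.univ.erase i, (1:ℝ) := by
      apply Finset.sum_lt_sum_of_nonempty
      · rw [← Finset.card_pos, Finset.card_erase_of_mem (Finset.mem_univ i), Finset.card_univ,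
          Fintype.card_fin]
        omega
      · exact fun j _ => ha1 j
    have hsplit : a i + ∑ j ∈ Finset.univ.erase i, a j = ∑ j, a j :=
      Finset.add_sum_erase _ _ (Finset.mem_univ i)
    have hcount : ∑ _j ∈ Finset.univ.erase i, (1:ℝ) = (k:ℝ) - 1 := by
      rw [Finset.sum_const, Finset.card_erase_of_mem (Finset.mem_univ i), Finset.card_univ,
        Fintype.card_fin]
      rw [nsmul_eq_mul, mul_one, Nat.cast_sub hk1, Nat.cast_one]
    rw [hcount] at herase
    linarith
  have hconv := aux_strictConvexOn q hq
  set f : ℝ → ℝ := fun x => (q ^ x - 1)⁻¹ with hf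
  set t : Fin k → ℝ := fun i => (a i - α) / (1 - α) with ht
  set s : Fin k → ℝ := fun i => (1 - a i) / (1 - α) with hs
  have key : ∀ i, f (a i) < s i * f α + t i * f 1 := by
    intro i
    have hsi : 0 < s i := div_pos (by linarith [ha1 i]) h1α
    have hti : 0 < t i := div_pos (by linarith [hαa i]) h1α
    have hst : s i + t i = 1 := by
      simp only [hs, ht]
      rw [← add_div, div_eq_one_iff_eq h1α.ne']
      ring
    have := hconv.2 (Set.mem_Ioi.mpr hα) (Set.mem_Ioi.mpr one_pos) (ne_of_lt hα1) hsi hti hst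
    have hcomb : s i • α + t i • (1:ℝ) = a i := by
      simp only [smul_eq_mul, hs, ht]
      field_simp
      ring
    rw [hcomb] at this
    simpa [smul_eq_mul] using this
  have hsum_s : ∑ i, s i = 1 := by
    simp only [hs]
    rw [← Finset.sum_div]
    rw [Finset.sum_sub_distrib, Finset.sum_const, Finset.card_univ, Fintype.card_fin, ← hsum]
    field_simp
    ring
  have hsum_t : ∑ i, t i = (k:ℝ) - 1 := by
    simp only [ht]
    rw [← Finset.sum_div]
    rw [Finset.sum_sub_distrib, Finset.sum_const, Finset.card_univ, Fintype.card_fin, ← hsum]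
    field_simp
    ring
  have main : ∑ i, f (a i) < ∑ i, (s i * f α + t i * f 1) :=
    Finset.sum_lt_sum_of_nonempty Finset.univ_nonempty (fun i _ => key i)
  rw [Finset.sum_add_distrib, ← Finset.sum_mul, ← Finset.sum_mul, hsum_s, hsum_t] at main
  have hf1 : f 1 = (q - 1)⁻¹ := by simp [hf, Real.rpow_one]
  rw [hf1, one_mul] at main
  simpa [hf, one_div, div_eq_mul_inv] using main
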